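/- Let n ≥ 2 and 1 < p, p̄₁, p̄₂ < ∞. The constant p · ω_n^{1/p̄₂ - 1/p̄₁} in the mixed radial-angular inequality for the dual Hardy operator is sharp: if C ≥ 0 is a constant such that ‖H* f‖_{L^p_{|x|}L^{p̄₂}_θ} ≤ C · ‖f‖_{L^p_{|x|}L^{p̄₁}_θ} for all nonnegative measurable f on ℝⁿ, then C ≥ p · ω_n^{1/p̄₂ - 1/p̄₁}. -/

import Mathlib

open MeasureTheory Metric Set

noncomputable section

/-- Euclidean space ℝⁿ. -/
abbrev Euc (n : ℕ) := EuclideanSpace ℝ (Fin n)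

/-- Volume of the unit ball in ℝⁿ: Ω_n = π^(n/2) / Γ(1 + n/2). -/
def ballVol (n : ℕ) : ℝ := Real.pi ^ ((n : ℝ) / 2) / Real.Gamma (1 + (n : ℝ) / 2)

/-- Surface measure of the unit sphere S^{n-1}: ω_n = 2π^(n/2) / Γ(n/2). -/
def sphArea (n : ℕ) : ℝ := 2 * Real.pi ^ ((n : ℝ) / 2) / Real.Gamma ((n : ℝ) / 2)

/-- The surface measure dθ on the unit sphere S^{n-1} ⊂ ℝⁿ (total mass ω_n = n·Ω_n). -/
def sphereMeasure (n : ℕ) : Measure (sphere (0 : Euc n) 1) :=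
  (volume : Measure (Euc n)).toSphere

/-- Mixed radial-angular norm
‖f‖ = (∫₀^∞ (∫_{S^{n-1}} |f(rθ)|^{p̄} dθ)^{p/p̄} r^{n-1} dr)^{1/p}. -/
def mixedNorm (n : ℕ) (p pb : ℝ) (f : Euc n → ℝ) : ℝ :=
  (∫ r in Ioi (0 : ℝ),
      (∫ θ, |f (r • (θ : Euc n))| ^ pb ∂(sphereMeasure n)) ^ (p / pb) * r ^ ((n : ℝ) - 1)) ^ (1 / p)

/-- Weak mixed radial-angular norm: sup_{λ>0} λ‖χ_{|f|>λ}‖. -/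
def wMixedNorm (n : ℕ) (p pb : ℝ) (f : Euc n → ℝ) : ℝ :=
  ⨆ l : {l : ℝ // 0 < l},
    l.1 * mixedNorm n p pb (indicator {x | l.1 < |f x|} fun _ => (1 : ℝ))

/-- n-dimensional Hardy operator H f(x) = (Ω_n |x|ⁿ)⁻¹ ∫_{|y|<|x|} f(y) dy. -/
def hardyOp (n : ℕ) (f : Euc n → ℝ) (x : Euc n) : ℝ :=
  (ballVol n * ‖x‖ ^ n)⁻¹ * ∫ y in {y : Euc n | ‖y‖ < ‖x‖}, f y

/-- Dual Hardy operator H* f(x) = ∫_{|y|≥|x|} f(y)/(Ω_n |y|ⁿ) dy. -/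
def dualHardyOp (n : ℕ) (f : Euc n → ℝ) (x : Euc n) : ℝ :=
  ∫ y in {y : Euc n | ‖x‖ ≤ ‖y‖}, f y / (ballVol n * ‖y‖ ^ n)

/-- Fractional Hardy operator H_β f(x) = (Ω_n^{1/n}|x|)^{β-n} ∫_{|y|<|x|} f(y) dy. -/
def fracHardyOp (n : ℕ) (β : ℝ) (f : Euc n → ℝ) (x : Euc n) : ℝ :=
  (ballVol n ^ ((1 : ℝ) / n) * ‖x‖) ^ (-((n : ℝ) - β)) * ∫ y in {y : Euc n | ‖y‖ < ‖x‖}, f y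

/-- L^p norm on ℝⁿ. -/
def lpNorm (n : ℕ) (p : ℝ) (f : Euc n → ℝ) : ℝ := (∫ x : Euc n, |f x| ^ p) ^ (1 / p)

/-- Beta function B(a,b) = ∫₀¹ t^{a-1}(1-t)^{b-1} dt. -/
def betaFn (a b : ℝ) : ℝ := ∫ t in (0 : ℝ)..1, t ^ (a - 1) * (1 - t) ^ (b - 1)

/-- Sharp constant C_{p,q,n,β} = (p'/q)^{1/q}((n/(qβ))·B(n/(qβ), n/(q'β)))^{-β/n}. -/
def fracHardyConst (p q : ℝ) (n : ℕ) (β : ℝ) : ℝ :=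
  (p / (p - 1) / q) ^ (1 / q) *
    ((n / (q * β)) * betaFn ((n : ℝ) / (q * β)) ((n : ℝ) / ((q / (q - 1)) * β))) ^ (-(β / (n : ℝ)))


-- Auxiliary lemmas for the sharpness proof

lemma ballVol_pos (n : ℕ) : 0 < ballVol n := by
  have := Real.Gamma_pos_of_pos (by positivity : (0:ℝ) < 1 + (n:ℝ)/2)
  have := Real.rpow_pos_of_pos Real.pi_pos ((n:ℝ)/2)
  unfold ballVol; positivity

lemma sphArea_pos (n : ℕ) (hn : 1 ≤ n) : 0 < sphArea n := by
  have h : (0:ℝ) < (n:ℝ)/2 := by positivity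
  have := Real.Gamma_pos_of_pos h
  have := Real.rpow_pos_of_pos Real.pi_pos ((n:ℝ)/2)
  unfold sphArea; positivity

lemma sphArea_eq (n : ℕ) (hn : 1 ≤ n) : sphArea n = n * ballVol n := by
  have hn2 : ((n:ℝ)/2) ≠ 0 := by positivity
  have hΓ : Real.Gamma (1 + (n:ℝ)/2) = ((n:ℝ)/2) * Real.Gamma ((n:ℝ)/2) := by
    rw [add_comm, Real.Gamma_add_one hn2]
  have hΓpos := Real.Gamma_pos_of_pos (by positivity : (0:ℝ) < (n:ℝ)/2)
  rw [sphArea, ballVol, hΓ]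
  field_simp

lemma ball_toReal (n : ℕ) (hn : 1 ≤ n) :
    (volume (ball (0 : Euc n) 1)).toReal = ballVol n := by
  haveI : Nonempty (Fin n) := Fin.pos_iff_nonempty.mp hn
  rw [EuclideanSpace.volume_ball]
  have h1 : Real.sqrt Real.pi ^ n = Real.pi ^ ((n:ℝ)/2) := by
    rw [Real.sqrt_eq_rpow, ← Real.rpow_natCast (Real.pi ^ ((1:ℝ)/2)) n,
      ← Real.rpow_mul Real.pi_pos.le]
    rw [one_div, inv_mul_eq_div]
  have h2 : (0:ℝ) ≤ Real.pi ^ ((n:ℝ)/2) / Real.Gamma (1 + (n:ℝ)/2) :=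
    (ballVol_pos n).le
  simp [Fintype.card_fin, h1, ballVol, add_comm, ENNReal.toReal_mul,
    ENNReal.toReal_ofReal, h2]

lemma polar (n : ℕ) (hn : 1 ≤ n) (f : ℝ → ℝ) :
    ∫ x : Euc n, f ‖x‖ = (n * ballVol n) * ∫ r in Ioi (0:ℝ), r ^ (n - 1 : ℕ) * f r := by
  haveI : Nonempty (Fin n) := Fin.pos_iff_nonempty.mp hn
  haveI : Nontrivial (Euc n) := by
    have : 0 < Module.finrank ℝ (Euc n) := by
      rw [finrank_euclideanSpace_fin]; omega
    exact Module.nontrivial_of_finrank_pos this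
  have := MeasureTheory.integral_fun_norm_addHaar (volume : Measure (Euc n)) f
  rw [this, finrank_euclideanSpace_fin, measureReal_def, ball_toReal n hn]
  simp only [nsmul_eq_mul, smul_eq_mul]
  rw [mul_assoc, ← integral_const_mul]

lemma sphere_univ_toReal (n : ℕ) (hn : 1 ≤ n) :
    ((sphereMeasure n) univ).toReal = sphArea n := by
  haveI : Nonempty (Fin n) := Fin.pos_iff_nonempty.mp hn
  rw [sphereMeasure, Measure.toSphere_apply_univ, finrank_euclideanSpace_fin,
    ENNReal.toReal_mul, ball_toReal n hn, sphArea_eq n hn]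
  simp

lemma angular_const (n : ℕ) (hn : 1 ≤ n) (c : ℝ) :
    ∫ _θ : sphere (0 : Euc n) 1, c ∂(sphereMeasure n) = sphArea n * c := by
  rw [integral_const, measureReal_def, sphere_univ_toReal n hn, smul_eq_mul]

lemma mixedNorm_radial (n : ℕ) (hn : 1 ≤ n) (p pb : ℝ) (hp : 0 < p) (hpb : 0 < pb)
    (g : ℝ → ℝ) (f : Euc n → ℝ) (hfg : ∀ x, f x = g ‖x‖) :
    mixedNorm n p pb f =
      sphArea n ^ (1/pb) * (∫ r in Ioi (0:ℝ), |g r| ^ p * r ^ ((n:ℝ) - 1)) ^ (1/p) := by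
  have hω := (sphArea_pos n hn).le
  have key : ∀ r ∈ Ioi (0:ℝ),
      (∫ θ : sphere (0 : Euc n) 1, |f (r • (θ : Euc n))| ^ pb ∂(sphereMeasure n)) ^ (p / pb)
        * r ^ ((n:ℝ) - 1)
      = sphArea n ^ (p/pb) * (|g r| ^ p * r ^ ((n:ℝ) - 1)) := by
    intro r hr
    have hnorm : ∀ θ : sphere (0 : Euc n) 1, f (r • (θ : Euc n)) = g r := by
      intro θ
      rw [hfg, norm_smul, Real.norm_eq_abs, abs_of_pos hr]
      have h1 : ‖(θ : Euc n)‖ = 1 := by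
        have := θ.2; simp [dist_eq_norm] at this; simp [this]
      rw [h1, mul_one]
    simp only [hnorm]
    rw [angular_const n hn, Real.mul_rpow hω (Real.rpow_nonneg (abs_nonneg _) _),
      ← Real.rpow_mul (abs_nonneg (g r)), mul_div_cancel₀ _ (ne_of_gt hpb), mul_assoc]
  rw [mixedNorm, setIntegral_congr_fun measurableSet_Ioi key, integral_const_mul,
    Real.mul_rpow (Real.rpow_nonneg hω _) (by
      apply setIntegral_nonneg measurableSet_Ioi; intro r hr
      exact mul_nonneg (Real.rpow_nonneg (abs_nonneg _) _) (Real.rpow_nonneg (le_of_lt hr) _))]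
  rw [← Real.rpow_mul hω]
  congr 2
  field_simp

lemma dual_compute (n : ℕ) (hn : 1 ≤ n) (a : ℝ) (ha : 0 < a) (x : Euc n) :
    dualHardyOp n (fun y => if 1 ≤ ‖y‖ then ‖y‖ ^ (-a) else 0) x
      = ((n : ℝ) / a) * (max ‖x‖ 1) ^ (-a) := by
  set b : ℝ := max ‖x‖ 1 with hb
  have hb1 : (1:ℝ) ≤ b := le_max_right _ _
  have hb0 : (0:ℝ) < b := lt_of_lt_of_le one_pos hb1
  set Ω : ℝ := ballVol n with hΩ
  have hΩ0 : Ω ≠ 0 := (ballVol_pos n).ne'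
  have hS : MeasurableSet {y : Euc n | ‖x‖ ≤ ‖y‖} :=
    measurableSet_le measurable_const measurable_norm
  have step1 : dualHardyOp n (fun y => if 1 ≤ ‖y‖ then ‖y‖ ^ (-a) else 0) x
      = ∫ y : Euc n, (fun s : ℝ => if b ≤ s then s ^ (-a) / (Ω * s ^ n) else 0) ‖y‖ := by
    rw [dualHardyOp, ← integral_indicator hS]
    congr 1; funext y
    by_cases h1 : ‖x‖ ≤ ‖y‖ <;> by_cases h2 : (1:ℝ) ≤ ‖y‖ <;>
      simp [indicator_apply, h1, h2, hb, max_le_iff, zero_div, ← hΩ]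
  rw [step1, polar n hn (fun s : ℝ => if b ≤ s then s ^ (-a) / (Ω * s ^ n) else 0)]
  have step3 : ∀ r ∈ Ioi (0:ℝ),
      r ^ (n - 1 : ℕ) * (if b ≤ r then r ^ (-a) / (Ω * r ^ n) else 0)
      = indicator (Ici b) (fun r : ℝ => r ^ (-1 - a) / Ω) r := by
    intro r hr
    have hr0 : (0:ℝ) < r := hr
    by_cases h : b ≤ r
    · simp only [h, if_true, indicator_apply, mem_Ici, h, if_pos]
      have hpow : (r:ℝ) ^ (n : ℕ) = r ^ (n - 1 : ℕ) * r := by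
        rw [← pow_succ]; congr 1; omega
      have hra : r ^ (-1 - a) = r ^ (-(1:ℝ)) * r ^ (-a) := by
        rw [← Real.rpow_add hr0]; ring_nf
      rw [hpow, hra, Real.rpow_neg_one]
      field_simp
    · simp [h, indicator_apply, mem_Ici]
  rw [setIntegral_congr_fun measurableSet_Ioi step3]
  rw [setIntegral_indicator measurableSet_Ici]
  have hinter : Ioi (0:ℝ) ∩ Ici b = Ici b :=
    inter_eq_right.mpr (fun r (hr : r ∈ Ici b) => lt_of_lt_of_le hb0 hr)
  rw [hinter, integral_Ici_eq_integral_Ioi]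
  have hdiv : ∫ r in Ioi b, r ^ (-1 - a) / Ω = (∫ r in Ioi b, r ^ (-1 - a)) / Ω := by
    rw [div_eq_mul_inv, ← integral_mul_const]; simp [div_eq_mul_inv]
  rw [hdiv, integral_Ioi_rpow_of_lt (by linarith) hb0]
  have h1 : -1 - a + 1 = -a := by ring
  rw [h1]
  field_simp
  ring

lemma J_eq (n : ℕ) (p a : ℝ) (hp : 0 < p) (hap : (n:ℝ) < a * p) :
    ∫ r in Ioi (0:ℝ), |if 1 ≤ r then r ^ (-a) else 0| ^ p * r ^ ((n:ℝ) - 1)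
      = 1 / (a * p - n) := by
  have key : ∀ r ∈ Ioi (0:ℝ),
      |if 1 ≤ r then r ^ (-a) else 0| ^ p * r ^ ((n:ℝ) - 1)
        = indicator (Ici (1:ℝ)) (fun r => r ^ ((n:ℝ) - 1 - a * p)) r := by
    intro r hr
    have hr0 : (0:ℝ) < r := hr
    by_cases h : (1:ℝ) ≤ r
    · simp only [h, if_true, indicator_apply, mem_Ici, if_pos]
      rw [abs_of_nonneg (Real.rpow_nonneg hr0.le _), ← Real.rpow_mul hr0.le,
        ← Real.rpow_add hr0]
      congr 1; ring
    · simp [h, indicator_apply, abs_zero, Real.zero_rpow hp.ne']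
  rw [setIntegral_congr_fun measurableSet_Ioi key,
    setIntegral_indicator measurableSet_Ici]
  have hinter : Ioi (0:ℝ) ∩ Ici 1 = Ici 1 :=
    inter_eq_right.mpr (fun r (hr : r ∈ Ici 1) => show (0:ℝ) < r from lt_of_lt_of_le one_pos hr)
  rw [hinter, integral_Ici_eq_integral_Ioi,
    integral_Ioi_rpow_of_lt (by linarith) one_pos]
  rw [Real.one_rpow]
  have h1 : (n:ℝ) - 1 - a * p + 1 = (n:ℝ) - a * p := by ring
  rw [h1, neg_div, ← div_neg, neg_sub]

lemma K_ge (n : ℕ) (p a : ℝ) (hp : 0 < p) (ha : 0 < a) (hn : 1 ≤ n)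
    (hap : (n:ℝ) < a * p) :
    ((n:ℝ) / a) ^ p * (1 / (a * p - n))
      ≤ ∫ r in Ioi (0:ℝ), |((n:ℝ) / a) * (max r 1) ^ (-a)| ^ p * r ^ ((n:ℝ) - 1) := by
  have hna : (0:ℝ) < (n:ℝ) / a := by
    have : (0:ℝ) < (n:ℝ) := by exact_mod_cast hn
    positivity
  set φ : ℝ → ℝ := fun r => |((n:ℝ) / a) * (max r 1) ^ (-a)| ^ p * r ^ ((n:ℝ) - 1) with hφ
  have hIoi1 : ∀ r ∈ Ioi (1:ℝ), φ r = ((n:ℝ)/a) ^ p * r ^ ((n:ℝ) - 1 - a * p) := by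
    intro r hr
    have hr1 : (1:ℝ) ≤ r := le_of_lt hr
    have hr0 : (0:ℝ) < r := lt_of_lt_of_le one_pos hr1
    rw [hφ]
    simp only [max_eq_left hr1]
    rw [abs_of_nonneg (by positivity), Real.mul_rpow hna.le (Real.rpow_nonneg hr0.le _),
      ← Real.rpow_mul hr0.le, mul_assoc, ← Real.rpow_add hr0]
    congr 2; ring
  have hIoc : ∀ r ∈ Ioc (0:ℝ) 1, φ r = ((n:ℝ)/a) ^ p * r ^ ((n:ℝ) - 1) := by
    intro r hr
    rw [hφ]
    simp only [max_eq_right hr.2, Real.one_rpow, mul_one,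
      abs_of_nonneg hna.le]
  have hint1 : IntegrableOn φ (Ioc (0:ℝ) 1) := by
    apply (IntegrableOn.congr_fun _ (fun r hr => (hIoc r hr).symm) measurableSet_Ioc)
    apply Integrable.const_mul
    have hn1 : (1:ℝ) ≤ (n:ℝ) := by exact_mod_cast hn
    have := intervalIntegral.intervalIntegrable_rpow' (a := 0) (b := 1)
      (r := (n:ℝ) - 1) (by linarith)
    exact (intervalIntegrable_iff_integrableOn_Ioc_of_le zero_le_one).mp this
  have hint2 : IntegrableOn φ (Ioi (1:ℝ)) := by
    apply (IntegrableOn.congr_fun _ (fun r hr => (hIoi1 r hr).symm) measurableSet_Ioi)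
    apply Integrable.const_mul
    exact integrableOn_Ioi_rpow_of_lt (by linarith) one_pos
  have hint : IntegrableOn φ (Ioi (0:ℝ)) := by
    rw [← Ioc_union_Ioi_eq_Ioi (zero_le_one (α := ℝ))]
    exact hint1.union hint2
  have hpos : 0 ≤ᵐ[volume.restrict (Ioi (0:ℝ))] φ := by
    filter_upwards [ae_restrict_mem measurableSet_Ioi] with r hr
    have hr0 : (0:ℝ) < r := hr
    have h1 : (0:ℝ) ≤ |((n:ℝ) / a) * (max r 1) ^ (-a)| ^ p :=
      Real.rpow_nonneg (abs_nonneg _) _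
    exact mul_nonneg h1 (Real.rpow_nonneg hr0.le _)
  have hmono : ∫ r in Ioi (1:ℝ), φ r ≤ ∫ r in Ioi (0:ℝ), φ r :=
    setIntegral_mono_set hint hpos
      (HasSubset.Subset.eventuallyLE (Ioi_subset_Ioi zero_le_one))
  refine le_trans (le_of_eq ?_) hmono
  rw [setIntegral_congr_fun measurableSet_Ioi hIoi1, integral_const_mul,
    integral_Ioi_rpow_of_lt (by linarith) one_pos, Real.one_rpow]
  have h1 : (n:ℝ) - 1 - a * p + 1 = (n:ℝ) - a * p := by ring
  rw [h1, neg_div, ← div_neg, neg_sub]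

lemma eps_step (n : ℕ) (hn : 2 ≤ n) (p pb1 pb2 : ℝ)
    (hp : 1 < p) (hpb1 : 1 < pb1) (hpb2 : 1 < pb2)
    (C : ℝ)
    (hbound : ∀ f : Euc n → ℝ, (∀ x, 0 ≤ f x) → Measurable f →
      mixedNorm n p pb2 (dualHardyOp n f) ≤ C * mixedNorm n p pb1 f)
    (ε : ℝ) (hε : 0 < ε) :
    sphArea n ^ (1 / pb2 - 1 / pb1) * ((n:ℝ) / ((n:ℝ) / p + ε)) ≤ C := by
  have hn1 : 1 ≤ n := by omega
  have hnR : (0:ℝ) < (n:ℝ) := by exact_mod_cast Nat.lt_of_lt_of_le Nat.zero_lt_two hn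
  have hp0 : (0:ℝ) < p := lt_trans one_pos hp
  set a : ℝ := (n:ℝ) / p + ε with ha_def
  have ha : 0 < a := by positivity
  have hap : (n:ℝ) < a * p := by
    have h1 : a * p = (n:ℝ) + ε * p := by
      rw [ha_def]; field_simp
    rw [h1]
    nlinarith
  have hJpos : (0:ℝ) < 1 / (a * p - n) := by
    have : (0:ℝ) < a * p - n := by linarith
    positivity
  have hω := sphArea_pos n hn1
  -- the test function
  have hf0 : ∀ x : Euc n, 0 ≤ (if 1 ≤ ‖x‖ then ‖x‖ ^ (-a) else 0 : ℝ) := by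
    intro x
    split
    · exact Real.rpow_nonneg (norm_nonneg x) _
    · exact le_refl 0
  have hfm : Measurable (fun x : Euc n => if 1 ≤ ‖x‖ then ‖x‖ ^ (-a) else 0 : Euc n → ℝ) := by
    have hgm : Measurable (fun r : ℝ => if 1 ≤ r then r ^ (-a) else 0) :=
      Measurable.ite (measurableSet_le measurable_const measurable_id)
        (measurable_id.pow_const (-a)) measurable_const
    exact hgm.comp measurable_norm
  have hb := hbound (fun x => if 1 ≤ ‖x‖ then ‖x‖ ^ (-a) else 0) hf0 hfm
  have h1 : mixedNorm n p pb1 (fun x : Euc n => if 1 ≤ ‖x‖ then ‖x‖ ^ (-a) else 0)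
      = sphArea n ^ (1/pb1) * (1/(a*p-(n:ℝ))) ^ (1/p) := by
    rw [mixedNorm_radial n hn1 p pb1 hp0 (lt_trans one_pos hpb1)
      (fun r : ℝ => if 1 ≤ r then r ^ (-a) else 0) _ (fun x => rfl),
      J_eq n p a hp0 hap]
  have h2 : mixedNorm n p pb2 (dualHardyOp n (fun x => if 1 ≤ ‖x‖ then ‖x‖ ^ (-a) else 0))
      = sphArea n ^ (1/pb2) *
        (∫ r in Ioi (0:ℝ), |((n:ℝ) / a) * (max r 1) ^ (-a)| ^ p * r ^ ((n:ℝ) - 1)) ^ (1/p) := by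
    exact mixedNorm_radial n hn1 p pb2 hp0 (lt_trans one_pos hpb2)
      (fun r : ℝ => ((n:ℝ) / a) * (max r 1) ^ (-a)) _
      (fun x => dual_compute n hn1 a ha x)
  rw [h1, h2] at hb
  -- lower bound the K integral
  have hna : (0:ℝ) < (n:ℝ) / a := by positivity
  have hKp : ((n:ℝ)/a) * (1/(a*p-(n:ℝ))) ^ (1/p)
      ≤ (∫ r in Ioi (0:ℝ), |((n:ℝ) / a) * (max r 1) ^ (-a)| ^ p * r ^ ((n:ℝ) - 1)) ^ (1/p) := by
    have heq : ((n:ℝ)/a) * (1/(a*p-(n:ℝ))) ^ (1/p)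
        = (((n:ℝ)/a) ^ p * (1/(a*p-(n:ℝ)))) ^ (1/p) := by
      rw [Real.mul_rpow (Real.rpow_nonneg hna.le _) hJpos.le,
        ← Real.rpow_mul hna.le, mul_one_div_cancel hp0.ne', Real.rpow_one]
    rw [heq]
    exact Real.rpow_le_rpow (by positivity) (K_ge n p a hp0 ha hn1 hap) (by positivity)
  have hchain : sphArea n ^ (1/pb2) * (((n:ℝ)/a) * (1/(a*p-(n:ℝ))) ^ (1/p))
      ≤ C * (sphArea n ^ (1/pb1) * (1/(a*p-(n:ℝ))) ^ (1/p)) := by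
    calc sphArea n ^ (1/pb2) * (((n:ℝ)/a) * (1/(a*p-(n:ℝ))) ^ (1/p))
        ≤ sphArea n ^ (1/pb2) *
          (∫ r in Ioi (0:ℝ), |((n:ℝ) / a) * (max r 1) ^ (-a)| ^ p * r ^ ((n:ℝ) - 1)) ^ (1/p) :=
          mul_le_mul_of_nonneg_left hKp (Real.rpow_nonneg hω.le _)
      _ ≤ _ := hb
  have ht : (0:ℝ) < (1/(a*p-(n:ℝ))) ^ (1/p) := Real.rpow_pos_of_pos hJpos _
  have hfinal : sphArea n ^ (1/pb2) * ((n:ℝ)/a) ≤ C * sphArea n ^ (1/pb1) := by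
    have := hchain
    rw [← mul_assoc, ← mul_assoc] at this
    exact le_of_mul_le_mul_right this ht
  rw [Real.rpow_sub hω, div_mul_eq_mul_div, div_le_iff₀ (Real.rpow_pos_of_pos hω _)]
  calc sphArea n ^ (1/pb2) * ((n:ℝ)/a) ≤ C * sphArea n ^ (1/pb1) := hfinal
    _ = C * sphArea n ^ (1/pb1) := rfl


/-- sharpness of the constant p·ω_n^{1/p̄₂-1/p̄₁} for the dual Hardy operator. -/
theorem dualHardy_mixed_sharp (n : ℕ) (hn : 2 ≤ n) (p pb1 pb2 : ℝ)
    (hp : 1 < p) (hpb1 : 1 < pb1) (hpb2 : 1 < pb2)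
    (C : ℝ) (hC : 0 ≤ C)
    (hbound : ∀ f : Euc n → ℝ, (∀ x, 0 ≤ f x) → Measurable f →
      mixedNorm n p pb2 (dualHardyOp n f) ≤ C * mixedNorm n p pb1 f) :
    p * sphArea n ^ (1 / pb2 - 1 / pb1) ≤ C := by

  have hnR : (0:ℝ) < (n:ℝ) := by exact_mod_cast Nat.lt_of_lt_of_le Nat.zero_lt_two hn
  have hp0 : (0:ℝ) < p := lt_trans one_pos hp
  set d : ℝ := 1 / pb2 - 1 / pb1 with hd
  set F : ℝ → ℝ := fun ε => sphArea n ^ d * ((n:ℝ) / ((n:ℝ) / p + ε)) with hF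
  have hkey : ∀ ε ∈ Ioi (0:ℝ), F ε ≤ C := fun ε hε =>
    eps_step n hn p pb1 pb2 hp hpb1 hpb2 C hbound ε hε
  have hden : (n:ℝ) / p + 0 ≠ 0 := by positivity
  have hcont : ContinuousAt F 0 := by
    apply ContinuousAt.mul continuousAt_const
    exact ContinuousAt.div continuousAt_const (continuousAt_const.add continuousAt_id) hden
  have hval : F 0 = sphArea n ^ d * p := by
    rw [hF]
    simp only [add_zero]
    congr 1
    rw [div_div_eq_mul_div]
    field_simp
  have hten : Filter.Tendsto F (nhdsWithin 0 (Ioi (0:ℝ))) (nhds (sphArea n ^ d * p)) := by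
    rw [← hval]
    exact (hcont.continuousWithinAt).tendsto
  have := le_of_tendsto hten (Filter.eventually_of_mem self_mem_nhdsWithin hkey)
  linarith [this, mul_comm (sphArea n ^ d) p]

end
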